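/- Start with 2n values in {−1,1}: in the first scenario exactly n+1 are +1 and n−1 are −1, in the second exactly n are +1 and n are −1. Flip each independently with probability η < 1/2; let p₁ and p₀ respectively be the probabilities that the resulting sums are 0. Then p₀ − p₁ ≥ (2η−1)²·c₀/n^{3/2} for some absolute constant c₀ > 0. -/

import Mathlib

open Finset

/-- Binomial probability: probability of exactly k successes in m independent
trials with success probability η. -/
noncomputable def binomProb (m : ℕ) (η : ℝ) (k : ℕ) : ℝ :=
  (m.choose k : ℝ) * η ^ k * (1 - η) ^ (m - k)

/-- `pSum n d η` is the probability that the sum of 2n ±1-values, starting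
with n+d values +1 and n−d values −1, becomes 0 after each value is flipped
independently with probability η. -/
noncomputable def pSum (n d : ℕ) (η : ℝ) : ℝ :=
  ∑ j ∈ Finset.range (n + d + 1), ∑ k ∈ Finset.range (n - d + 1),
    if j = k + d then binomProb (n + d) η j * binomProb (n - d) η k else 0

namespace PSumGapAux

open Polynomial

lemma coeff_lin_pow (a b : ℝ) (m j : ℕ) :
    ((C a + C b * X) ^ m).coeff j = (m.choose j : ℝ) * b ^ j * a ^ (m - j) := by
  rw [add_comm (C a), add_pow, finset_sum_coeff]
  rw [Finset.sum_eq_single j]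
  · simp only [← C_eq_natCast, mul_pow, ← C_pow, coeff_mul_C, coeff_C_mul, coeff_X_pow]
    simp; ring
  · intro i _ hij
    simp only [← C_eq_natCast, mul_pow, ← C_pow, coeff_mul_C, coeff_C_mul, coeff_X_pow]
    simp [Ne.symm hij]
  · intro hj
    simp only [Finset.mem_range, not_lt] at hj
    simp [Nat.choose_eq_zero_of_lt (by omega : m < j)]

lemma pSum0_eq (n : ℕ) (η : ℝ) :
    pSum n 0 η = (((C (1-η) + C η * X) ^ n) * ((C η + C (1-η) * X) ^ n)).coeff n := by
  rw [coeff_mul, Finset.Nat.sum_antidiagonal_eq_sum_range_succ_mk]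
  unfold pSum binomProb
  simp only [add_zero, Nat.add_zero, Nat.sub_zero]
  refine Finset.sum_congr rfl fun j hj => ?_
  rw [Finset.sum_ite_eq, if_pos hj, coeff_lin_pow, coeff_lin_pow]
  have hj' : j ≤ n := by simpa [Nat.lt_succ_iff] using hj
  rw [Nat.choose_symm hj', Nat.sub_sub_self hj']
  ring

lemma pSum1_eq (m : ℕ) (η : ℝ) :
    pSum (m+1) 1 η = (((C (1-η) + C η * X) ^ (m+2)) * ((C η + C (1-η) * X) ^ m)).coeff (m+1) := by
  rw [coeff_mul, Finset.Nat.sum_antidiagonal_eq_sum_range_succ_mk, Finset.sum_range_succ']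
  unfold pSum binomProb
  rw [Finset.sum_comm]
  have h0 : ((C η + C (1-η) * X : ℝ[X]) ^ m).coeff (m + 1 - 0) = 0 := by
    rw [coeff_lin_pow]
    simp [Nat.choose_eq_zero_of_lt]
  rw [h0, mul_zero, add_zero]
  simp only [Nat.add_sub_cancel]
  refine Finset.sum_congr rfl fun k hk => ?_
  have hk' : k ≤ m := by simpa [Nat.lt_succ_iff] using hk
  rw [Finset.sum_ite_eq', if_pos (by simp only [Finset.mem_range]; omega :
    k + 1 ∈ Finset.range (m + 1 + 1 + 1))]
  rw [coeff_lin_pow, coeff_lin_pow]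
  have e1 : m + 1 - (k + 1) = m - k := by omega
  rw [e1, Nat.choose_symm hk', Nat.sub_sub_self hk']
  have e2 : m + 1 + 1 = m + 2 := rfl
  rw [e2]
  ring

lemma hcoeff (η : ℝ) (k : ℕ) :
    ((1+X : ℝ[X])^(2*k) * ((1-X) * (C (1-η) + C η * X))).coeff (k+1)
      = (2*η-1) * (((2*k).choose k : ℝ) - ((2*k).choose (k+1) : ℝ)) := by
  have hR : ((1+X : ℝ[X])^(2*k) * ((1-X) * (C (1-η) + C η * X)))
      = C (1-η) * (1+X)^(2*k) + C (2*η-1) * (X * (1+X)^(2*k)) - C η * (X^2 * (1+X)^(2*k)) := by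
    simp only [map_sub, map_mul, map_one, map_ofNat]; ring
  have hx2 : ((X:ℝ[X])^2 * (1+X)^(2*k)).coeff (k+1) = (((2*k).choose (k+1) : ℕ) : ℝ) := by
    cases k with
    | zero => simp
    | succ j =>
      rw [show j + 1 + 1 = j + 2 from rfl, coeff_X_pow_mul ((1+X : ℝ[X])^(2*(j+1))) 2 j,
        coeff_one_add_X_pow]
      have h2 : (2*(j+1)).choose j = (2*(j+1)).choose (j+2) := by
        rw [← Nat.choose_symm (show j+2 ≤ 2*(j+1) by omega),
          show 2*(j+1) - (j+2) = j from by omega]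
      exact_mod_cast h2
  rw [hR, coeff_sub, coeff_add, coeff_C_mul, coeff_C_mul, coeff_C_mul, coeff_X_mul,
    coeff_one_add_X_pow, coeff_one_add_X_pow, hx2]
  ring

lemma gap_eq (m : ℕ) (η : ℝ) :
    pSum (m+1) 0 η - pSum (m+1) 1 η
    = (2*η-1)^2 * ∑ k ∈ range (m+1), (m.choose k : ℝ) * (η*(1-η))^k * ((1-2*η)^2)^(m-k)
        * (((2*k).choose k : ℝ) - ((2*k).choose (k+1) : ℝ)) := by
  rw [pSum0_eq, pSum1_eq, ← coeff_sub]
  have hfactor : (C (1-η) + C η * X : ℝ[X])^(m+1) * (C η + C (1-η) * X)^(m+1)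
      - (C (1-η) + C η * X)^(m+2) * (C η + C (1-η) * X)^m
      = ((C (1-η) + C η * X) * (C η + C (1-η) * X))^m
        * (C (2*η-1) * ((1-X) * (C (1-η) + C η * X))) := by
    simp only [map_mul, map_sub, map_add, map_one, map_ofNat, mul_pow]
    ring
  have hfg : (C (1-η) + C η * X : ℝ[X]) * (C η + C (1-η) * X)
      = C (η*(1-η)) * (1+X)^2 + C ((1-2*η)^2) * X := by
    simp only [map_mul, map_sub, map_add, map_one, map_ofNat, map_pow]
    ring
  rw [hfactor, hfg, add_pow, Finset.sum_mul, finset_sum_coeff, Finset.mul_sum]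
  refine Finset.sum_congr rfl fun k hk => ?_
  have hk' : k ≤ m := by simpa [Nat.lt_succ_iff] using hk
  have hterm : (C (η*(1-η)) * (1+X)^2)^k * (C ((1-2*η)^2) * X)^(m-k) * (m.choose k : ℝ[X])
        * (C (2*η-1) * ((1-X) * (C (1-η) + C η * X)))
      = C ((m.choose k : ℝ) * (η*(1-η))^k * ((1-2*η)^2)^(m-k) * (2*η-1))
        * (X^(m-k) * ((1+X)^(2*k) * ((1-X) * (C (1-η) + C η * X)))) := by
    simp only [map_mul, map_sub, map_add, map_one, map_pow, map_ofNat, C_eq_natCast,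
      pow_mul, mul_pow]
    ring
  rw [hterm, coeff_C_mul, show m + 1 = (k+1) + (m-k) from by omega,
    coeff_X_pow_mul, hcoeff]
  ring

lemma sixteen_le (k : ℕ) (hk : 1 ≤ k) : 16^k ≤ 4 * k * (Nat.centralBinom k)^2 := by
  induction k with
  | zero => omega
  | succ j ih =>
    rcases eq_or_lt_of_le hk with h | h
    · have hj0 : j = 0 := by omega
      subst hj0
      have : Nat.centralBinom 1 = 2 := by decide
      simp [this]
    · have hj : 1 ≤ j := by omega
      have ihj := ih hj
      have hrec : (j+1) * Nat.centralBinom (j+1) = 2 * (2*j+1) * Nat.centralBinom j :=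
        Nat.succ_mul_centralBinom_succ j
      have key : (j+1) * 16^(j+1) ≤ (j+1) * (4 * (j+1) * (Nat.centralBinom (j+1))^2) := by
        have h1 : (j+1) * (4 * (j+1) * (Nat.centralBinom (j+1))^2)
            = 4 * ((j+1) * Nat.centralBinom (j+1))^2 := by ring
        rw [h1, hrec]
        have h2 : 4 * (2 * (2*j+1) * Nat.centralBinom j)^2
            = 16 * ((2*j+1)^2 * (Nat.centralBinom j)^2) := by ring
        rw [h2]
        have h3 : (j+1) * 16^(j+1) = 16 * ((j+1) * 16^j) := by ring
        rw [h3]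
        have h4 : (j+1) * 16^j ≤ (2*j+1)^2 * (Nat.centralBinom j)^2 := by
          calc (j+1) * 16^j ≤ (j+1) * (4 * j * (Nat.centralBinom j)^2) :=
                Nat.mul_le_mul_left _ ihj
            _ = (4*j*(j+1)) * (Nat.centralBinom j)^2 := by ring
            _ ≤ (2*j+1)^2 * (Nat.centralBinom j)^2 := by
                apply Nat.mul_le_mul_right
                nlinarith
        omega
      exact Nat.le_of_mul_le_mul_left key (by omega)

lemma choose_diff (k : ℕ) :
    ((2*k).choose k : ℝ) - ((2*k).choose (k+1) : ℝ) = ((2*k).choose k : ℝ) / (k+1) := by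
  have h := Nat.choose_succ_right_eq (2*k) k
  rw [show 2*k - k = k from by omega] at h
  have h' : ((2*k).choose (k+1) : ℝ) * (k+1) = ((2*k).choose k : ℝ) * k := by exact_mod_cast h
  have hk1 : (k:ℝ) + 1 ≠ 0 := by positivity
  field_simp
  nlinarith [h']

lemma tb (n k : ℕ) (hk : k + 1 ≤ n) :
    (4:ℝ)^k / (2 * n * Real.sqrt n) ≤ ((2*k).choose k : ℝ) - ((2*k).choose (k+1) : ℝ) := by
  have hn1 : (1:ℝ) ≤ n := by exact_mod_cast Nat.one_le_iff_ne_zero.2 (by omega)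
  have hsn : (1:ℝ) ≤ Real.sqrt n := by
    rw [show (1:ℝ) = Real.sqrt 1 from (Real.sqrt_one).symm]
    exact Real.sqrt_le_sqrt hn1
  have hpos : (0:ℝ) < 2 * n * Real.sqrt n := by positivity
  rcases Nat.eq_zero_or_pos k with rfl | hk1
  · have h1 : (4:ℝ)^0 / (2*n*Real.sqrt n) ≤ 1 := by
      rw [pow_zero, div_le_one hpos]; nlinarith
    simpa using h1
  · rw [choose_diff]
    have hc : ((2*k).choose k : ℝ) = (Nat.centralBinom k : ℝ) := by rw [Nat.centralBinom]
    have h16 : (16:ℝ)^k ≤ 4 * k * ((Nat.centralBinom k):ℝ)^2 := by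
      exact_mod_cast sixteen_le k hk1
    have hcb0 : (0:ℝ) < (Nat.centralBinom k : ℝ) := by exact_mod_cast Nat.centralBinom_pos k
    have hkn : (k:ℝ) ≤ (n:ℝ) := by exact_mod_cast (by omega : k ≤ n)
    have hsk : Real.sqrt k ≤ Real.sqrt n := Real.sqrt_le_sqrt hkn
    have hskpos : (0:ℝ) < Real.sqrt k := Real.sqrt_pos.2 (by exact_mod_cast hk1)
    have hs2 : (Real.sqrt k)^2 = (k:ℝ) := Real.sq_sqrt (by positivity)
    have key : (4:ℝ)^k ≤ 2 * Real.sqrt k * (Nat.centralBinom k : ℝ) := by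
      have h1 : ((4:ℝ)^k)^2 ≤ (2 * Real.sqrt k * (Nat.centralBinom k : ℝ))^2 := by
        have h2 : ((4:ℝ)^k)^2 = (16:ℝ)^k := by
          rw [← pow_mul, show (16:ℝ) = 4^2 from by norm_num, ← pow_mul]
          ring_nf
        nlinarith [h16]
      have h3 := Real.sqrt_le_sqrt h1
      rwa [Real.sqrt_sq (by positivity), Real.sqrt_sq (by positivity)] at h3
    rw [hc, div_le_div_iff₀ hpos (by positivity : (0:ℝ) < (k:ℝ)+1)]
    have hk1n : (k:ℝ) + 1 ≤ (n:ℝ) := by exact_mod_cast hk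
    calc (4:ℝ)^k * ((k:ℝ)+1) ≤ (2 * Real.sqrt k * (Nat.centralBinom k : ℝ)) * ((k:ℝ)+1) := by
          apply mul_le_mul_of_nonneg_right key (by positivity)
      _ = 2 * (Nat.centralBinom k : ℝ) * (Real.sqrt k * ((k:ℝ)+1)) := by ring
      _ ≤ 2 * (Nat.centralBinom k : ℝ) * (Real.sqrt n * (n:ℝ)) := by
          apply mul_le_mul_of_nonneg_left _ (by positivity)
          exact mul_le_mul hsk hk1n (by positivity) (Real.sqrt_nonneg n)
      _ = (Nat.centralBinom k : ℝ) * (2 * (n:ℝ) * Real.sqrt n) := by ring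

end PSumGapAux

open PSumGapAux in
/-- there is an absolute constant c₀ > 0 such that
p₀ − p₁ ≥ (2η−1)²·c₀/n^{3/2}. -/
theorem pSum_gap :
    ∃ c₀ : ℝ, 0 < c₀ ∧ ∀ n : ℕ, 1 ≤ n → ∀ η : ℝ, 0 ≤ η → η < 1 / 2 →
      (2 * η - 1) ^ 2 * c₀ / (n : ℝ) ^ ((3 : ℝ) / 2) ≤
        pSum n 0 η - pSum n 1 η := by
  refine ⟨1/2, by norm_num, ?_⟩
  intro n hn η hη0 hη
  obtain ⟨m, rfl⟩ : ∃ m, n = m + 1 := ⟨n - 1, by omega⟩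
  set N : ℝ := ((m+1 : ℕ) : ℝ) with hN
  have hN0 : (0:ℝ) < N := by positivity
  have hN1 : (1:ℝ) ≤ N := by rw [hN]; exact_mod_cast hn
  have hsN : (0:ℝ) < Real.sqrt N := Real.sqrt_pos.2 hN0
  have hq : (0:ℝ) ≤ η * (1-η) := mul_nonneg hη0 (by linarith)
  have hr : (0:ℝ) ≤ (1-2*η)^2 := sq_nonneg _
  -- sum of binomial weights is 1
  have hone : ∑ k ∈ range (m+1), (4*(η*(1-η)))^k * ((1-2*η)^2)^(m-k) * ((m.choose k : ℕ) : ℝ)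
      = 1 := by
    rw [← add_pow]
    rw [show 4*(η*(1-η)) + (1-2*η)^2 = 1 from by ring, one_pow]
  have hS : 1/(2*N*Real.sqrt N)
      ≤ ∑ k ∈ range (m+1), (m.choose k : ℝ) * (η*(1-η))^k * ((1-2*η)^2)^(m-k)
          * (((2*k).choose k : ℝ) - ((2*k).choose (k+1) : ℝ)) := by
    have step1 : 1/(2*N*Real.sqrt N)
        = ∑ k ∈ range (m+1), (m.choose k : ℝ) * (η*(1-η))^k * ((1-2*η)^2)^(m-k)
            * ((4:ℝ)^k / (2*N*Real.sqrt N)) := by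
      rw [eq_comm]
      have hterm : ∀ k, (m.choose k : ℝ) * (η*(1-η))^k * ((1-2*η)^2)^(m-k)
            * ((4:ℝ)^k / (2*N*Real.sqrt N))
          = ((4*(η*(1-η)))^k * ((1-2*η)^2)^(m-k) * ((m.choose k : ℕ) : ℝ))
            * (1/(2*N*Real.sqrt N)) := fun k => by simp only [mul_pow]; ring
      rw [Finset.sum_congr rfl (fun k _ => hterm k), ← Finset.sum_mul, hone, one_mul]
    rw [step1]
    refine Finset.sum_le_sum fun k hk => ?_
    have hkm : k + 1 ≤ m + 1 := by simpa [Nat.lt_succ_iff] using hk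
    have htb := tb (m+1) k hkm
    have hnn : (0:ℝ) ≤ (m.choose k : ℝ) * (η*(1-η))^k * ((1-2*η)^2)^(m-k) :=
      mul_nonneg (mul_nonneg (by positivity) (pow_nonneg hq k)) (pow_nonneg hr (m-k))
    exact mul_le_mul_of_nonneg_left htb hnn
  have hgap := gap_eq m η
  have hfin : (2*η-1)^2 * (1/(2*N*Real.sqrt N)) ≤ pSum (m+1) 0 η - pSum (m+1) 1 η := by
    rw [hgap]
    exact mul_le_mul_of_nonneg_left hS (sq_nonneg _)
  have hN32 : N ^ ((3:ℝ)/2) = N * Real.sqrt N := by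
    rw [show (3:ℝ)/2 = 1 + 1/2 from by norm_num, Real.rpow_add hN0, Real.rpow_one,
      ← Real.sqrt_eq_rpow N]
  calc (2*η-1)^2 * (1/2) / N ^ ((3:ℝ)/2)
      = (2*η-1)^2 * (1/(2*N*Real.sqrt N)) := by
        rw [hN32]; field_simp
    _ ≤ pSum (m+1) 0 η - pSum (m+1) 1 η := hfin
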